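/- Fix ρ ∈ (0,1), and let γ(x) = x·log x + (1−x)·log(1−x). For probability-vector weights w_1, w_2 > 0 with w_1 + w_2 = 1 and values p_1 = ρ·q_1, p_2 = ρ·q_2 with 0 < q_1 ≠ q_2 and p_1, p_2 ∈ (0,1), define the merged value p̄ = w_1·p_1 + w_2·p_2. Then w_1·γ(p_1) + w_2·γ(p_2) − γ(p̄) ≥ c·ρ for some constant c > 0 depending only on q_1, q_2, w_1 (and not on ρ), for all sufficiently small ρ. -/

import Mathlib

theorem jensen_gap_order_rho (γ : ℝ → ℝ)
    (hγ : ∀ x, γ x = x * Real.log x + (1 - x) * Real.log (1 - x))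
    (q₁ q₂ w₁ w₂ : ℝ) (hq₁ : 0 < q₁) (hq₂ : 0 < q₂) (hne : q₁ ≠ q₂)
    (hw₁ : 0 < w₁) (hw₁' : w₁ < 1) (hw₂ : w₂ = 1 - w₁) :
    ∃ c > (0 : ℝ), ∃ ρ₀ > (0 : ℝ), ∀ ρ : ℝ, 0 < ρ → ρ < ρ₀ →
      ρ * q₁ < 1 → ρ * q₂ < 1 →
      c * ρ ≤ w₁ * γ (ρ * q₁) + w₂ * γ (ρ * q₂)
        - γ (w₁ * (ρ * q₁) + w₂ * (ρ * q₂)) := by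
  subst hw₂
  have hw₂ : 0 < 1 - w₁ := by linarith
  set f : ℝ → ℝ := fun x => x * Real.log x with hf
  set qb : ℝ := w₁ * q₁ + (1 - w₁) * q₂ with hqb
  have hqb_pos : 0 < qb := by positivity
  have hK : f qb < w₁ * f q₁ + (1 - w₁) * f q₂ := by
    have := Real.strictConvexOn_mul_log.2 (le_of_lt hq₁) (le_of_lt hq₂) hne
      hw₁ hw₂ (by ring)
    simpa [hf, smul_eq_mul, hqb] using this
  refine ⟨w₁ * f q₁ + (1 - w₁) * f q₂ - f qb, by linarith, 1, one_pos,
    fun ρ hρ _ h1 h2 => ?_⟩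
  have ha : 0 < ρ * q₁ := by positivity
  have hb : 0 < ρ * q₂ := by positivity
  have hm : w₁ * (ρ * q₁) + (1 - w₁) * (ρ * q₂) = ρ * qb := by ring
  have hm1 : ρ * qb < 1 := by
    nlinarith
  -- convex remainder
  have hconv : f (1 - ρ * qb) ≤ w₁ * f (1 - ρ * q₁) + (1 - w₁) * f (1 - ρ * q₂) := by
    have := Real.convexOn_mul_log.2 (x := 1 - ρ * q₁) (y := 1 - ρ * q₂)
      (by simp; linarith) (by simp; linarith) (le_of_lt hw₁) (le_of_lt hw₂) (by ring)
    have he : w₁ • (1 - ρ * q₁) + (1 - w₁) • (1 - ρ * q₂) = 1 - ρ * qb := by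
      simp [smul_eq_mul, hqb]; ring
    rw [he] at this
    simpa [smul_eq_mul] using this
  -- log expansions
  have la : Real.log (ρ * q₁) = Real.log ρ + Real.log q₁ :=
    Real.log_mul (ne_of_gt hρ) (ne_of_gt hq₁)
  have lb : Real.log (ρ * q₂) = Real.log ρ + Real.log q₂ :=
    Real.log_mul (ne_of_gt hρ) (ne_of_gt hq₂)
  have lm : Real.log (ρ * qb) = Real.log ρ + Real.log qb :=
    Real.log_mul (ne_of_gt hρ) (ne_of_gt hqb_pos)
  have key : w₁ * γ (ρ * q₁) + (1 - w₁) * γ (ρ * q₂)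
      - γ (w₁ * (ρ * q₁) + (1 - w₁) * (ρ * q₂))
      = ρ * (w₁ * f q₁ + (1 - w₁) * f q₂ - f qb)
        + (w₁ * f (1 - ρ * q₁) + (1 - w₁) * f (1 - ρ * q₂) - f (1 - ρ * qb)) := by
    rw [hm, hγ, hγ, hγ]
    simp only [hf]
    rw [la, lb, lm]
    rw [hqb]; ring
  rw [key]
  nlinarith
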